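/- If a finite sum Σ_l Q_l(|z₁|²,...,|z_n|²) · M_l is harmonic on ℝ^{2n} ≅ ℂ^n, where the M_l are pairwise distinct monomials of the form ∏_j z_{σ(j)}^{c_j^l} (each coordinate appearing either as z_j or z̄_j but not both) and each Q_l is a complex polynomial in n variables, then each summand Q_l(|z₁|²,...,|z_n|²) · M_l is harmonic. -/
import Mathlib


open MvPolynomial

/- We identify polynomials on `ℝ^{2n} ≅ ℂⁿ` with formal polynomials in the `2n`
variables `z₁,…,zₙ, z̄₁,…,z̄ₙ`, indexed by `Fin n ⊕ Fin n` (`inl j ↦ z_j`,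
`inr j ↦ z̄_j`).  In these coordinates the Euclidean Laplacian is (four times)
`∑_j ∂_{z_j} ∂_{z̄_j}`, and `|z_j|² = z_j z̄_j`. -/

/-- The Laplacian `∑_j ∂_{z_j} ∂_{z̄_j}` in complex coordinates (harmonicity on `ℝ^{2n}`
is equivalent to being annihilated by this operator). -/
noncomputable def cxLaplacian (n : ℕ) :
    MvPolynomial (Fin n ⊕ Fin n) ℂ →ₗ[ℂ] MvPolynomial (Fin n ⊕ Fin n) ℂ :=
  ∑ j : Fin n, (pderiv (Sum.inl j)).toLinearMap ∘ₗ (pderiv (Sum.inr j)).toLinearMap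

/-- The monomial `∏_j z_{σ(j)}^{c_j}`, where `σ(j)` is `z̄_j` if `ε j` and `z_j`
otherwise. -/
noncomputable def sigmaMonomial (n : ℕ) (c : Fin n → ℕ) (ε : Fin n → Bool) :
    MvPolynomial (Fin n ⊕ Fin n) ℂ :=
  ∏ j : Fin n, X (if ε j then Sum.inr j else Sum.inl j) ^ c j

/-- The summand `Q(|z₁|²,…,|zₙ|²) · ∏_j z_{σ(j)}^{c_j}`. -/
noncomputable def radialSummand (n : ℕ) (Q : MvPolynomial (Fin n) ℂ) (c : Fin n → ℕ)
    (ε : Fin n → Bool) : MvPolynomial (Fin n ⊕ Fin n) ℂ :=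
  (aeval (fun j : Fin n => X (Sum.inl j) * X (Sum.inr j)) Q) * sigmaMonomial n c ε


namespace HarmonicAux

/-- The signed-exponent weights: `z_j ↦ e_j`, `z̄_j ↦ -e_j`. -/
noncomputable def wt (n : ℕ) : Fin n ⊕ Fin n → (Fin n → ℤ) :=
  Sum.elim (fun j => Pi.single j 1) (fun j => -Pi.single j 1)

lemma isWH_pderiv {σ M : Type*} [DecidableEq σ] [AddCommGroup M] {w : σ → M}
    {p : MvPolynomial σ ℂ} {m : M} (hp : p.IsWeightedHomogeneous w m) (i : σ) :
    (pderiv i p).IsWeightedHomogeneous w (m - w i) := by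
  classical
  rw [p.as_sum, map_sum]
  apply IsWeightedHomogeneous.sum
  intro d hd
  rw [pderiv_monomial]
  by_cases h0 : d i = 0
  · rw [h0]
    simpa using isWeightedHomogeneous_zero ℂ w (m - w i)
  · apply isWeightedHomogeneous_monomial
    have hdm : Finsupp.weight w d = m := hp (mem_support_iff.mp hd)
    have hdd : (d - Finsupp.single i 1) + Finsupp.single i 1 = d := by
      ext j
      simp only [Finsupp.add_apply, Finsupp.tsub_apply, Finsupp.single_apply]
      split <;> rename_i hj
      · subst hj; omega
      · omega
    have := congrArg (Finsupp.weight w) hdd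
    rw [map_add, hdm] at this
    have hsingle : Finsupp.weight w (Finsupp.single i 1) = w i := by
      simp [Finsupp.weight_apply, Finsupp.sum_single_index]
    rw [hsingle] at this
    rw [← this]; abel

lemma isWH_X_pow {σ M : Type*} [AddCommMonoid M] (w : σ → M) (i : σ) (k : ℕ) :
    IsWeightedHomogeneous w ((X i : MvPolynomial σ ℂ) ^ k) (k • w i) := by
  induction k with
  | zero => simpa using isWeightedHomogeneous_one ℂ w
  | succ k ih =>
      rw [pow_succ, succ_nsmul]
      exact ih.mul (isWeightedHomogeneous_X ℂ w i)

lemma isWH_aeval {n : ℕ} (Q : MvPolynomial (Fin n) ℂ) :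
    IsWeightedHomogeneous (wt n)
      (aeval (fun j : Fin n =>
        (X (Sum.inl j) * X (Sum.inr j) : MvPolynomial (Fin n ⊕ Fin n) ℂ)) Q) 0 := by
  induction Q using MvPolynomial.induction_on with
  | C a => rw [aeval_C, algebraMap_eq]; exact isWeightedHomogeneous_C (wt n) a
  | add p q hp hq => rw [map_add]; exact hp.add hq
  | mul_X p j hp =>
      rw [map_mul, aeval_X]
      have hX : IsWeightedHomogeneous (wt n)
          (X (Sum.inl j) * X (Sum.inr j) : MvPolynomial (Fin n ⊕ Fin n) ℂ) 0 := by
        have := (isWeightedHomogeneous_X ℂ (wt n) (Sum.inl j)).mul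
          (isWeightedHomogeneous_X ℂ (wt n) (Sum.inr j))
        convert this using 1
        simp [wt]
      simpa using hp.mul hX

lemma isWH_radialSummand {n : ℕ} (Q : MvPolynomial (Fin n) ℂ) (c : Fin n → ℕ)
    (ε : Fin n → Bool) :
    IsWeightedHomogeneous (wt n) (radialSummand n Q c ε)
      (fun j : Fin n => if ε j then -(c j : ℤ) else (c j : ℤ)) := by
  classical
  have hσ : IsWeightedHomogeneous (wt n) (sigmaMonomial n c ε)
      (∑ j : Fin n, c j • wt n (if ε j then Sum.inr j else Sum.inl j)) := by
    apply IsWeightedHomogeneous.prod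
    intro j _
    exact isWH_X_pow (wt n) _ (c j)
  have hdeg : (∑ j : Fin n, c j • wt n (if ε j then Sum.inr j else Sum.inl j))
      = fun j : Fin n => if ε j then -(c j : ℤ) else (c j : ℤ) := by
    funext j'
    rw [Finset.sum_apply]
    rw [Finset.sum_eq_single j']
    · by_cases hε : ε j' <;> simp [wt, hε]
    · intro j _ hjj
      by_cases hε : ε j <;> simp [wt, hε, Pi.single_apply, hjj]
    · simp
  rw [← hdeg]
  have := (isWH_aeval Q).mul hσ
  rw [zero_add] at this
  rw [radialSummand]
  exact this

lemma isWH_cxLaplacian {n : ℕ} {p : MvPolynomial (Fin n ⊕ Fin n) ℂ} {m : Fin n → ℤ}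
    (hp : IsWeightedHomogeneous (wt n) p m) :
    IsWeightedHomogeneous (wt n) (cxLaplacian n p) m := by
  rw [cxLaplacian, LinearMap.sum_apply]
  apply IsWeightedHomogeneous.sum
  intro j _
  have := isWH_pderiv (isWH_pderiv hp (Sum.inr j)) (Sum.inl j)
  have heq : m - wt n (Sum.inr j) - wt n (Sum.inl j) = m := by
    simp [wt]
  rw [heq] at this
  simpa using this

end HarmonicAux

/-- if a finite sum `Σ_l Q_l(|z₁|²,…,|zₙ|²)·M_l` is harmonic, where the `M_l`
are pairwise distinct monomials `∏_j z_{σ(j)}^{c_j^l}` (distinct as torus characters,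
i.e. the signed exponent vectors differ), then each summand is harmonic. -/
theorem summands_of_harmonic_sum_are_harmonic (n L : ℕ)
    (Q : Fin L → MvPolynomial (Fin n) ℂ)
    (c : Fin L → Fin n → ℕ) (ε : Fin L → Fin n → Bool)
    (hdist : Function.Injective fun l : Fin L =>
      (fun j : Fin n => if ε l j then -(c l j : ℤ) else (c l j : ℤ)))
    (h : cxLaplacian n (∑ l : Fin L, radialSummand n (Q l) (c l) (ε l)) = 0) :
    ∀ l : Fin L, cxLaplacian n (radialSummand n (Q l) (c l) (ε l)) = 0 := by

  classical
  intro l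
  have χdef : ∀ l' : Fin L, (fun j : Fin n => if ε l' j then -(c l' j : ℤ) else (c l' j : ℤ))
      = fun j : Fin n => if ε l' j then -(c l' j : ℤ) else (c l' j : ℤ) := fun _ => rfl
  set w := HarmonicAux.wt n
  have hhom : ∀ l' : Fin L,
      MvPolynomial.IsWeightedHomogeneous w
        (cxLaplacian n (radialSummand n (Q l') (c l') (ε l')))
        (fun j : Fin n => if ε l' j then -(c l' j : ℤ) else (c l' j : ℤ)) := fun l' =>
    HarmonicAux.isWH_cxLaplacian (HarmonicAux.isWH_radialSummand (Q l') (c l') (ε l'))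
  have hsum : ∑ l' : Fin L, cxLaplacian n (radialSummand n (Q l') (c l') (ε l')) = 0 := by
    rw [← map_sum]; exact h
  have hc := congrArg (weightedHomogeneousComponent w
    (fun j : Fin n => if ε l j then -(c l j : ℤ) else (c l j : ℤ))) hsum
  rw [map_sum, map_zero, Finset.sum_eq_single_of_mem l (Finset.mem_univ l)
    (fun l' _ hl' => (hhom l').weightedHomogeneousComponent_ne _
      (fun he => hl' (hdist he.symm))),
    (hhom l).weightedHomogeneousComponent_same] at hc
  exact hc
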